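/- Apply the layered spin-configuration setup to the graph H = G'. Take mixer angles β_ℓ = ψ for 1 ≤ ℓ ≤ p−2 and β_{p−1} = β_p = π/4, where ψ is an arbitrary real number. Then for every integer k ≥ (p−1)·MAXCUT(G') + 200n0² + 2n0(11n0+1), the sum, over all layered spin configurations z on V(G') satisfying z_{x_0}^[p] ≠ z_{y_0}^[p] and D(z) = k, of z_{x_0}^[0] · z_{y_0}^[0] · Π_{x∈V(G')} f(z_x) equals 0. -/

import Mathlib

/-!
STATEMENT 2: no high-degree contribution under asynchronous flips. For the
gadget graph G′ built from G, with mixer angles β_ℓ = ψ (1 ≤ ℓ ≤ p-2) and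
β_{p-1} = β_p = π/4, the sum over layered configurations z with
z_{x₀}^{[p]} ≠ z_{y₀}^{[p]} and D(z) = k of z_{x₀}^{[0]} z_{y₀}^{[0]} ∏_x f(z_x)
vanishes whenever k ≥ (p-1)·MAXCUT(G′) + 200 n₀² + 2 n₀(11 n₀ + 1).
-/
noncomputable section

namespace QAOA

/-- Vertex type of the graph `G'` built from a graph on vertex type `V` of size `n0`:
gadget vertices `L u i` (`i < n0+1`), `R u i` (`i < 10 n0`), frame vertices
`X i`, `Y i` (`i < 100 n0²`), and the controller `W`. -/
inductive GPV (V : Type) (n0 : ℕ) : Type where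
  | L : V → Fin (n0 + 1) → GPV V n0
  | R : V → Fin (10 * n0) → GPV V n0
  | X : Fin (100 * n0 * n0) → GPV V n0
  | Y : Fin (100 * n0 * n0) → GPV V n0
  | W : GPV V n0
  deriving DecidableEq, Fintype

/-- Base relation (one orientation per edge) describing the edges of `G'`. -/
def gpRel {V : Type} [DecidableEq V] (n0 : ℕ) (G : SimpleGraph V) [DecidableRel G.Adj] :
    GPV V n0 → GPV V n0 → Bool
  | .L u _, .R v _ => u == v
  | .L u i, .L v j => decide (G.Adj u v) && ((i : ℕ) == (j : ℕ))
  | .X _, .Y _ => true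
  | .X i, .L _ _ => (i : ℕ) == 0
  | .X i, .R _ _ => (i : ℕ) == 0
  | .Y i, .L _ _ => (i : ℕ) == 0
  | .Y i, .R _ _ => (i : ℕ) == 0
  | .W, .X i => (i : ℕ) == 0
  | .W, .Y i => (i : ℕ) == 0
  | .W, .L _ i => (i : ℕ) == 0
  | _, _ => false

/-- The graph `G'` obtained from `G` by the four-step construction. -/
def Gp {V : Type} [DecidableEq V] (n0 : ℕ) (G : SimpleGraph V) [DecidableRel G.Adj] :
    SimpleGraph (GPV V n0) :=
  SimpleGraph.fromRel (fun a b => gpRel n0 G a b = true)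

instance {V : Type} [DecidableEq V] (n0 : ℕ) (G : SimpleGraph V) [DecidableRel G.Adj] :
    DecidableRel (Gp n0 G).Adj := fun a b =>
  decidable_of_iff _ (SimpleGraph.fromRel_adj (fun a b => gpRel n0 G a b = true) a b).symm

/-- The special frame vertex `x₀`. -/
def xzero (V : Type) (n0 : ℕ) (h : 0 < n0) : GPV V n0 :=
  GPV.X ⟨0, Nat.mul_pos (Nat.mul_pos (by norm_num) h) h⟩

/-- The special frame vertex `y₀`. -/
def yzero (V : Type) (n0 : ℕ) (h : 0 < n0) : GPV V n0 :=
  GPV.Y ⟨0, Nat.mul_pos (Nat.mul_pos (by norm_num) h) h⟩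

/-- `cutSet H S` is the number of edges of `H` with exactly one endpoint in `S`. -/
def cutSet {W : Type} [Fintype W] [DecidableEq W] (H : SimpleGraph W) [DecidableRel H.Adj]
    (S : Finset W) : ℕ :=
  (Finset.univ.filter (fun pr : W × W => H.Adj pr.1 pr.2 ∧ pr.1 ∈ S ∧ pr.2 ∉ S)).card

/-- `maxCut H` is the maximum of `cutSet H S` over all vertex subsets `S`. -/
def maxCut {W : Type} [Fintype W] [DecidableEq W] (H : SimpleGraph W) [DecidableRel H.Adj] : ℕ :=
  (Finset.univ : Finset (Finset W)).sup (fun S => cutSet H S)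

end QAOA
namespace QAOA

/-- Map a layer index `j ∈ {-p,…,p}` to an index in `Fin (2p+1)` (via `j ↦ j + p`). -/
def lay (p : ℕ) (j : ℤ) : Fin (2 * p + 1) :=
  ⟨(j + p).toNat % (2 * p + 1), Nat.mod_lt _ (by omega)⟩

/-- One-qubit mixer matrix element `m(β; a, b)`: `cos β` if `a = b`, `i sin β` otherwise. -/
noncomputable def mElem (β : ℝ) (a b : ℤˣ) : ℂ :=
  if a = b then (Real.cos β : ℂ) else Complex.I * (Real.sin β : ℂ)

/-- Conjugated mixer matrix element `m̄(β; a, b)`: `cos β` if `a = b`, `-i sin β` otherwise. -/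
noncomputable def mElemBar (β : ℝ) (a b : ℤˣ) : ℂ :=
  if a = b then (Real.cos β : ℂ) else -(Complex.I * (Real.sin β : ℂ))

/-- The one-site kernel `f(z_x)` of a vertex, given its layered spins
`zx : Fin (2p+1) → ℤˣ` and the mixer angles `β`. -/
noncomputable def kernel (p : ℕ) (β : ℕ → ℝ) (zx : Fin (2 * p + 1) → ℤˣ) : ℂ :=
  (1 / 2 : ℂ)
    * (∏ ℓ ∈ Finset.Icc 1 (p - 1), mElem (β ℓ) (zx (lay p ℓ)) (zx (lay p (ℓ + 1))))
    * mElem (β p) (zx (lay p p)) (zx (lay p 0))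
    * mElemBar (β p) (zx (lay p 0)) (zx (lay p (-(p : ℤ))))
    * (∏ ℓ ∈ Finset.Icc 1 (p - 1),
        mElemBar (β ℓ) (zx (lay p (-(ℓ : ℤ) - 1))) (zx (lay p (-(ℓ : ℤ)))))

/-- `layerCut H p z j` is the number of edges of `H` whose endpoints get different
signs on layer `j` (each unordered edge counted once). -/
def layerCut {W : Type} [Fintype W] [DecidableEq W] (H : SimpleGraph W) [DecidableRel H.Adj]
    (p : ℕ) (z : W → Fin (2 * p + 1) → ℤˣ) (j : ℤ) : ℕ :=
  (Finset.univ.filter (fun pr : W × W =>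
      H.Adj pr.1 pr.2 ∧ z pr.1 (lay p j) ≠ z pr.2 (lay p j))).card / 2

/-- The exponent `D(z) = Σ_{j=1}^p (C_j(z) - C_{-j}(z))` of a layered configuration. -/
def expnt {W : Type} [Fintype W] [DecidableEq W] (H : SimpleGraph W) [DecidableRel H.Adj]
    (p : ℕ) (z : W → Fin (2 * p + 1) → ℤˣ) : ℤ :=
  ∑ j ∈ Finset.Icc 1 p, ((layerCut H p z (j : ℤ) : ℤ) - (layerCut H p z (-(j : ℤ)) : ℤ))

/-- The monomial contribution `z_a^{[0]} z_b^{[0]} ∏_x f(z_x)` of a configuration. -/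
noncomputable def coeffTerm {W : Type} [Fintype W] [DecidableEq W] (p : ℕ) (β : ℕ → ℝ)
    (a b : W) (z : W → Fin (2 * p + 1) → ℤˣ) : ℂ :=
  ((z a (lay p 0) : ℤ) : ℂ) * ((z b (lay p 0) : ℤ) : ℂ) * ∏ x, kernel p β (z x)

/-- The mixer angles used in the reduction: `β_ℓ = ψ` for `1 ≤ ℓ ≤ p-2` and
`β_{p-1} = β_p = π/4`. -/
noncomputable def betaAngles (p : ℕ) (ψ : ℝ) : ℕ → ℝ := fun ℓ =>
  if ℓ = p - 1 ∨ ℓ = p then Real.pi / 4 else ψ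

end QAOA

namespace QAOA
open Finset

section AuxGeneral

lemma units_ne_iff : ∀ u v : ℤˣ, u ≠ v ↔ u = -v := by decide
lemma units_neg_ne : ∀ u : ℤˣ, -u ≠ u := by decide

lemma lay_val {p : ℕ} {j : ℤ} (h1 : -(p:ℤ) ≤ j) (h2 : j ≤ p) :
    ((lay p j : Fin (2*p+1)) : ℕ) = (j + p).toNat := by
  simp only [lay]
  exact Nat.mod_eq_of_lt (by omega)

lemma lay_ne {p : ℕ} {j : ℤ} (h0 : j ≠ 0) (h1 : -(p:ℤ) ≤ j) (h2 : j ≤ p) :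
    lay p j ≠ lay p 0 := by
  have hv1 := lay_val h1 h2
  have hv2 := lay_val (p := p) (j := 0) (by omega) (by omega)
  intro h
  rw [h] at hv1
  omega

variable {W : Type} [Fintype W] [DecidableEq W] (H : SimpleGraph W) [DecidableRel H.Adj]

lemma card_ne_split (g : W → ℤˣ) :
    (univ.filter (fun pr : W × W => H.Adj pr.1 pr.2 ∧ g pr.1 ≠ g pr.2)).card
      = 2 * (univ.filter (fun pr : W × W =>
          H.Adj pr.1 pr.2 ∧ g pr.1 = 1 ∧ g pr.2 = -1)).card := by
  classical
  set s1 := univ.filter (fun pr : W × W => H.Adj pr.1 pr.2 ∧ g pr.1 = 1 ∧ g pr.2 = -1) with hs1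
  set s2 := univ.filter (fun pr : W × W => H.Adj pr.1 pr.2 ∧ g pr.1 = -1 ∧ g pr.2 = 1) with hs2
  have hunion : univ.filter (fun pr : W × W => H.Adj pr.1 pr.2 ∧ g pr.1 ≠ g pr.2) = s1 ∪ s2 := by
    ext pr
    simp only [hs1, hs2, mem_union, mem_filter, mem_univ, true_and]
    constructor
    · rintro ⟨ha, hne⟩
      rcases Int.units_eq_one_or (g pr.1) with h1 | h1 <;>
        rcases Int.units_eq_one_or (g pr.2) with h2 | h2 <;>
          simp_all
    · rintro (⟨ha, h1, h2⟩ | ⟨ha, h1, h2⟩) <;> refine ⟨by assumption, ?_⟩ <;>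
        simp [h1, h2]
  have hdisj : Disjoint s1 s2 := by
    rw [Finset.disjoint_left]
    intro pr h1 h2
    simp only [hs1, hs2, mem_filter] at h1 h2
    have := h1.2.2.1
    have := h2.2.2.1
    simp_all
  have hcardeq : s2.card = s1.card := by
    apply Finset.card_bij (fun pr _ => Prod.swap pr)
    · intro pr hpr
      simp only [hs1, hs2, mem_filter, mem_univ, true_and] at hpr ⊢
      exact ⟨hpr.1.symm, hpr.2.2, hpr.2.1⟩
    · intro a _ b _ h
      exact Prod.swap_injective h
    · intro pr hpr
      refine ⟨Prod.swap pr, ?_, by simp⟩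
      simp only [hs1, hs2, mem_filter, mem_univ, true_and] at hpr ⊢
      exact ⟨hpr.1.symm, hpr.2.2, hpr.2.1⟩
  rw [hunion, Finset.card_union_of_disjoint hdisj, hcardeq]
  omega

lemma layerCut_eq (p : ℕ) (z : W → Fin (2*p+1) → ℤˣ) (j : ℤ) :
    layerCut H p z j = (univ.filter (fun pr : W × W =>
        H.Adj pr.1 pr.2 ∧ z pr.1 (lay p j) = 1 ∧ z pr.2 (lay p j) = -1)).card := by
  unfold layerCut
  rw [card_ne_split H (fun x => z x (lay p j))]
  omega

lemma two_mul_layerCut (p : ℕ) (z : W → Fin (2*p+1) → ℤˣ) (j : ℤ) :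
    2 * layerCut H p z j = (univ.filter (fun pr : W × W =>
        H.Adj pr.1 pr.2 ∧ z pr.1 (lay p j) ≠ z pr.2 (lay p j))).card := by
  rw [layerCut_eq, card_ne_split H (fun x => z x (lay p j))]

lemma layerCut_le_maxCut (p : ℕ) (z : W → Fin (2*p+1) → ℤˣ) (j : ℤ) :
    layerCut H p z j ≤ maxCut H := by
  classical
  rw [layerCut_eq]
  have : (univ.filter (fun pr : W × W =>
        H.Adj pr.1 pr.2 ∧ z pr.1 (lay p j) = 1 ∧ z pr.2 (lay p j) = -1)).card
      = cutSet H (univ.filter (fun x => z x (lay p j) = 1)) := by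
    unfold cutSet
    congr 1
    apply Finset.filter_congr
    intro pr _
    simp only [mem_filter, mem_univ, true_and]
    constructor
    · rintro ⟨ha, h1, h2⟩
      refine ⟨ha, h1, ?_⟩
      rw [h2]; decide
    · rintro ⟨ha, h1, h2⟩
      refine ⟨ha, h1, ?_⟩
      rcases Int.units_eq_one_or (z pr.2 (lay p j)) with h | h
      · exact absurd h h2
      · exact h
  rw [this]
  exact Finset.le_sup (Finset.mem_univ _)

lemma layerCut_congr (p : ℕ) (z z' : W → Fin (2*p+1) → ℤˣ) (j : ℤ)
    (h : ∀ x, z' x (lay p j) = z x (lay p j)) :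
    layerCut H p z' j = layerCut H p z j := by
  unfold layerCut
  congr 2
  apply Finset.filter_congr
  intro pr _
  rw [h pr.1, h pr.2]

end AuxGeneral
end QAOA

namespace QAOA
open Finset

section CutDiff
variable {W : Type} [Fintype W] [DecidableEq W] (H : SimpleGraph W) [DecidableRel H.Adj]

lemma units_neg_ne_iff : ∀ u v : ℤˣ, (-u ≠ v) ↔ u = v := by decide
lemma units_ne_neg_iff : ∀ u v : ℤˣ, (u ≠ -v) ↔ u = v := by decide

lemma cut_diff (s t : W → ℤˣ) (a0 b0 w' : W) (d : ℕ)
    (hab : H.Adj a0 b0) (haw : H.Adj a0 w') (hbw : H.Adj b0 w')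
    (hwa : w' ≠ a0) (hwb : w' ≠ b0)
    (hta : t a0 = - s a0) (htb : t b0 = - s b0)
    (hto : ∀ x, x ≠ a0 → x ≠ b0 → t x = s x)
    (hs : s a0 ≠ s b0)
    (hda : (univ.filter (fun x => H.Adj a0 x)).card ≤ d)
    (hdb : (univ.filter (fun x => H.Adj b0 x)).card ≤ d) :
    (univ.filter (fun pr : W × W => H.Adj pr.1 pr.2 ∧ s pr.1 ≠ s pr.2)).card + 8
      ≤ (univ.filter (fun pr : W × W => H.Adj pr.1 pr.2 ∧ t pr.1 ≠ t pr.2)).card + 4 * d := by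
  classical
  set e : W × W → Prop := fun pr => ¬((pr.1 = a0 ∨ pr.1 = b0) ↔ (pr.2 = a0 ∨ pr.2 = b0)) with he
  set A := univ.filter (fun pr : W × W => H.Adj pr.1 pr.2 ∧ s pr.1 ≠ s pr.2) with hA
  set B := univ.filter (fun pr : W × W => H.Adj pr.1 pr.2 ∧ t pr.1 ≠ t pr.2) with hB
  set E1 := univ.filter (fun pr : W × W => H.Adj pr.1 pr.2 ∧ e pr) with hE1
  have key : ∀ pr : W × W, ((pr.1 = a0 ∨ pr.1 = b0) ↔ (pr.2 = a0 ∨ pr.2 = b0)) →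
      (t pr.1 ≠ t pr.2 ↔ s pr.1 ≠ s pr.2) := by
    rintro ⟨x, y⟩ hiff
    by_cases hx : x = a0 ∨ x = b0
    · have hy := hiff.mp hx
      have h1 : t x = - s x := by rcases hx with rfl | rfl <;> assumption
      have h2 : t y = - s y := by rcases hy with rfl | rfl <;> assumption
      rw [h1, h2]
      simp only [ne_eq, neg_inj]
    · have hy : ¬(y = a0 ∨ y = b0) := fun h => hx (hiff.mpr h)
      rw [hto x (fun h => hx (Or.inl h)) (fun h => hx (Or.inr h)),
        hto y (fun h => hy (Or.inl h)) (fun h => hy (Or.inr h))]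
  have key2 : ∀ pr : W × W, e pr → (t pr.1 ≠ t pr.2 ↔ ¬ (s pr.1 ≠ s pr.2)) := by
    rintro ⟨x, y⟩ hpr
    simp only [he] at hpr
    by_cases hx : x = a0 ∨ x = b0
    · have hy : ¬(y = a0 ∨ y = b0) := fun h => hpr ⟨fun _ => h, fun _ => hx⟩
      have h1 : t x = - s x := by rcases hx with rfl | rfl <;> assumption
      rw [h1, hto y (fun h => hy (Or.inl h)) (fun h => hy (Or.inr h))]
      rcases Int.units_eq_one_or (s x) with hx1 | hx1 <;>
        rcases Int.units_eq_one_or (s y) with hy1 | hy1 <;> rw [hx1, hy1] <;> decide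
    · have hy : y = a0 ∨ y = b0 := by tauto
      have h2 : t y = - s y := by rcases hy with rfl | rfl <;> assumption
      rw [h2, hto x (fun h => hx (Or.inl h)) (fun h => hx (Or.inr h))]
      rcases Int.units_eq_one_or (s x) with hx1 | hx1 <;>
        rcases Int.units_eq_one_or (s y) with hy1 | hy1 <;> rw [hx1, hy1] <;> decide
  have hEq : (A.filter (fun pr => ¬ e pr)).card = (B.filter (fun pr => ¬ e pr)).card := by
    congr 1
    ext pr
    simp only [hA, hB, mem_filter, mem_univ, true_and, and_assoc, he, not_not]
    constructor
    · rintro ⟨ha, hss, hee⟩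
      exact ⟨ha, (key pr hee).mpr hss, hee⟩
    · rintro ⟨ha, htt, hee⟩
      exact ⟨ha, (key pr hee).mp htt, hee⟩
  have hAsplit := Finset.card_filter_add_card_filter_not (s := A) (p := e)
  have hBsplit := Finset.card_filter_add_card_filter_not (s := B) (p := e)
  have hUnion : A.filter e ∪ B.filter e = E1 := by
    ext pr
    simp only [hA, hB, hE1, mem_union, mem_filter, mem_univ, true_and, and_assoc]
    constructor
    · rintro (⟨ha, _, hee⟩ | ⟨ha, _, hee⟩) <;> exact ⟨ha, hee⟩
    · rintro ⟨ha, hee⟩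
      by_cases hss : s pr.1 ≠ s pr.2
      · exact Or.inl ⟨ha, hss, hee⟩
      · exact Or.inr ⟨ha, (key2 pr hee).mpr hss, hee⟩
  have hDisj : Disjoint (A.filter e) (B.filter e) := by
    rw [Finset.disjoint_left]
    intro pr h1 h2
    simp only [hA, hB, mem_filter, mem_univ, true_and, and_assoc] at h1 h2
    exact (key2 pr h1.2.2).mp h2.2.1 h1.2.1
  have hPart : (A.filter e).card + (B.filter e).card = E1.card := by
    rw [← hUnion, Finset.card_union_of_disjoint hDisj]
  -- lower bound on B.filter e
  have htww : t w' = s w' := hto w' hwa hwb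
  have hB2 : 2 ≤ (B.filter e).card := by
    obtain ⟨a, ha_or, hsw⟩ : ∃ a, (a = a0 ∨ a = b0) ∧ s w' = s a := by
      by_cases h : s w' = s a0
      · exact ⟨a0, Or.inl rfl, h⟩
      · refine ⟨b0, Or.inr rfl, ?_⟩
        rw [(units_ne_iff _ _).mp h, (units_ne_iff _ _).mp hs, neg_neg]
    have hadj : H.Adj a w' := by rcases ha_or with rfl | rfl <;> assumption
    have hta' : t a = - s a := by rcases ha_or with rfl | rfl <;> assumption
    have hwa' : w' ≠ a := by rcases ha_or with rfl | rfl <;> assumption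
    have hane : t a ≠ t w' := by
      rw [hta', htww, hsw]
      exact units_neg_ne _
    have hesp : e (a, w') := by
      simp only [he]
      intro hiff
      exact (by rcases hiff.mp ha_or with h | h; exact hwa h; exact hwb h : False)
    have hesp2 : e (w', a) := by
      simp only [he]
      intro hiff
      exact (by rcases hiff.mpr ha_or with h | h; exact hwa h; exact hwb h : False)
    have h1 : (a, w') ∈ B.filter e := by
      simp only [hB, mem_filter, mem_univ, true_and]
      exact ⟨⟨hadj, hane⟩, hesp⟩
    have h2 : (w', a) ∈ B.filter e := by
      simp only [hB, mem_filter, mem_univ, true_and]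
      exact ⟨⟨hadj.symm, fun h => hane h.symm⟩, hesp2⟩
    have hsub : ({(a, w'), (w', a)} : Finset (W × W)) ⊆ B.filter e := by
      intro pr hpr
      rcases Finset.mem_insert.mp hpr with rfl | hpr
      · exact h1
      · rw [Finset.mem_singleton.mp hpr]; exact h2
    have hpair : ((a, w') : W × W) ≠ (w', a) := by
      intro h
      exact hwa' (congrArg Prod.fst h).symm
    calc 2 = ({(a, w'), (w', a)} : Finset (W × W)).card := (Finset.card_pair hpair).symm
      _ ≤ (B.filter e).card := Finset.card_le_card hsub
  -- upper bound on E1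
  have hE1card : E1.card + 4 ≤ 4 * d := by
    set Na := (univ.filter (fun x => H.Adj a0 x)).erase b0 with hNa
    set Nb := (univ.filter (fun x => H.Adj b0 x)).erase a0 with hNb
    have hmemb : b0 ∈ univ.filter (fun x => H.Adj a0 x) := by
      simp only [mem_filter, mem_univ, true_and]; exact hab
    have hmema : a0 ∈ univ.filter (fun x => H.Adj b0 x) := by
      simp only [mem_filter, mem_univ, true_and]; exact hab.symm
    have hNacard : Na.card + 1 ≤ d := by
      rw [hNa, Finset.card_erase_of_mem hmemb]
      have : 0 < (univ.filter (fun x => H.Adj a0 x)).card := Finset.card_pos.mpr ⟨b0, hmemb⟩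
      omega
    have hNbcard : Nb.card + 1 ≤ d := by
      rw [hNb, Finset.card_erase_of_mem hmema]
      have : 0 < (univ.filter (fun x => H.Adj b0 x)).card := Finset.card_pos.mpr ⟨a0, hmema⟩
      omega
    have hsub : E1 ⊆ (({a0} : Finset W) ×ˢ Na ∪ ({b0} : Finset W) ×ˢ Nb)
        ∪ (Na ×ˢ ({a0} : Finset W) ∪ Nb ×ˢ ({b0} : Finset W)) := by
      rintro ⟨x, y⟩ hpr
      simp only [hE1, mem_filter, mem_univ, true_and, he] at hpr
      obtain ⟨hadj, hee⟩ := hpr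
      simp only [mem_union, mem_product, mem_singleton, hNa, hNb, Finset.mem_erase,
        mem_filter, mem_univ, true_and]
      by_cases hx : x = a0 ∨ x = b0
      · have hy : ¬(y = a0 ∨ y = b0) := fun h => hee ⟨fun _ => h, fun _ => hx⟩
        rcases hx with rfl | rfl
        · exact Or.inl (Or.inl ⟨rfl, fun h => hy (Or.inr h), hadj⟩)
        · exact Or.inl (Or.inr ⟨rfl, fun h => hy (Or.inl h), hadj⟩)
      · have hy : y = a0 ∨ y = b0 := by tauto
        rcases hy with rfl | rfl
        · exact Or.inr (Or.inl ⟨⟨fun h => hx (Or.inr h), hadj.symm⟩, rfl⟩)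
        · exact Or.inr (Or.inr ⟨⟨fun h => hx (Or.inl h), hadj.symm⟩, rfl⟩)
    have hcard : E1.card ≤ Na.card + Nb.card + (Na.card + Nb.card) := by
      calc E1.card ≤ _ := Finset.card_le_card hsub
        _ ≤ (({a0} : Finset W) ×ˢ Na ∪ ({b0} : Finset W) ×ˢ Nb).card
            + (Na ×ˢ ({a0} : Finset W) ∪ Nb ×ˢ ({b0} : Finset W)).card :=
          Finset.card_union_le _ _
        _ ≤ (({a0} : Finset W) ×ˢ Na).card + (({b0} : Finset W) ×ˢ Nb).card
            + ((Na ×ˢ ({a0} : Finset W)).card + (Nb ×ˢ ({b0} : Finset W)).card) :=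
          Nat.add_le_add (Finset.card_union_le _ _) (Finset.card_union_le _ _)
        _ = Na.card + Nb.card + (Na.card + Nb.card) := by
          simp [Finset.card_product]
    omega
  omega

end CutDiff
end QAOA

namespace QAOA
open Finset

section GpFacts
variable {V : Type} [Fintype V] [DecidableEq V] (n0 : ℕ) (hn0 : 0 < n0)
  (G : SimpleGraph V) [DecidableRel G.Adj]

/-- auxiliary injection counting neighbours of `x₀`. -/
def degFX (V : Type) (n0 : ℕ) : GPV V n0 → (V × Fin (n0+1)) ⊕ ((V × Fin (10*n0)) ⊕ (Fin (100*n0*n0) ⊕ Unit))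
  | .L u i => Sum.inl (u, i)
  | .R u i => Sum.inr (Sum.inl (u, i))
  | .Y j => Sum.inr (Sum.inr (Sum.inl j))
  | .X _ => Sum.inr (Sum.inr (Sum.inr ()))
  | .W => Sum.inr (Sum.inr (Sum.inr ()))

/-- auxiliary injection counting neighbours of `y₀`. -/
def degFY (V : Type) (n0 : ℕ) : GPV V n0 → (V × Fin (n0+1)) ⊕ ((V × Fin (10*n0)) ⊕ (Fin (100*n0*n0) ⊕ Unit))
  | .L u i => Sum.inl (u, i)
  | .R u i => Sum.inr (Sum.inl (u, i))
  | .X j => Sum.inr (Sum.inr (Sum.inl j))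
  | .Y _ => Sum.inr (Sum.inr (Sum.inr ()))
  | .W => Sum.inr (Sum.inr (Sum.inr ()))

lemma adj_x0_y0 : (Gp n0 G).Adj (xzero V n0 hn0) (yzero V n0 hn0) := by
  rw [Gp, SimpleGraph.fromRel_adj]
  refine ⟨by simp [xzero, yzero], Or.inl ?_⟩
  rfl

lemma adj_x0_w : (Gp n0 G).Adj (xzero V n0 hn0) GPV.W := by
  rw [Gp, SimpleGraph.fromRel_adj]
  refine ⟨by simp [xzero], Or.inr ?_⟩
  simp [gpRel, xzero]

lemma adj_y0_w : (Gp n0 G).Adj (yzero V n0 hn0) GPV.W := by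
  rw [Gp, SimpleGraph.fromRel_adj]
  refine ⟨by simp [yzero], Or.inr ?_⟩
  simp [gpRel, yzero]

lemma not_adj_x0_X (j : Fin (100 * n0 * n0)) :
    ¬ (Gp n0 G).Adj (xzero V n0 hn0) (GPV.X j) := by
  rw [Gp, SimpleGraph.fromRel_adj]
  rintro ⟨-, h | h⟩ <;> simp [gpRel, xzero] at h

lemma not_adj_y0_Y (j : Fin (100 * n0 * n0)) :
    ¬ (Gp n0 G).Adj (yzero V n0 hn0) (GPV.Y j) := by
  rw [Gp, SimpleGraph.fromRel_adj]
  rintro ⟨-, h | h⟩ <;> simp [gpRel, yzero] at h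

lemma deg_x0_le (hV : Fintype.card V = n0) :
    (univ.filter (fun b => (Gp n0 G).Adj (xzero V n0 hn0) b)).card
      ≤ 111 * n0 * n0 + n0 + 1 := by
  classical
  have hinj : Set.InjOn (degFX V n0)
      (univ.filter (fun b => (Gp n0 G).Adj (xzero V n0 hn0) b) : Finset (GPV V n0)) := by
    intro a ha b hb h
    simp only [Finset.coe_filter, Set.mem_setOf_eq, Finset.mem_univ, true_and] at ha hb
    cases a <;> cases b <;>
      first
        | (exact absurd ha (not_adj_x0_X n0 hn0 G _))
        | (exact absurd hb (not_adj_x0_X n0 hn0 G _))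
        | simp_all [degFX, degFY]
  have hle := Finset.card_le_card_of_injOn _ (fun a _ => Finset.mem_univ _) hinj
  calc (univ.filter (fun b => (Gp n0 G).Adj (xzero V n0 hn0) b)).card
      ≤ Fintype.card ((V × Fin (n0+1)) ⊕ ((V × Fin (10*n0)) ⊕ (Fin (100*n0*n0) ⊕ Unit))) := by
        simpa using hle
    _ = 111 * n0 * n0 + n0 + 1 := by
        simp [Fintype.card_sum, Fintype.card_prod, hV]
        ring
  
lemma deg_y0_le (hV : Fintype.card V = n0) :
    (univ.filter (fun b => (Gp n0 G).Adj (yzero V n0 hn0) b)).card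
      ≤ 111 * n0 * n0 + n0 + 1 := by
  classical
  have hinj : Set.InjOn (degFY V n0)
      (univ.filter (fun b => (Gp n0 G).Adj (yzero V n0 hn0) b) : Finset (GPV V n0)) := by
    intro a ha b hb h
    simp only [Finset.coe_filter, Set.mem_setOf_eq, Finset.mem_univ, true_and] at ha hb
    cases a <;> cases b <;>
      first
        | (exact absurd ha (not_adj_y0_Y n0 hn0 G _))
        | (exact absurd hb (not_adj_y0_Y n0 hn0 G _))
        | simp_all [degFX, degFY]
  have hle := Finset.card_le_card_of_injOn _ (fun a _ => Finset.mem_univ _) hinj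
  calc (univ.filter (fun b => (Gp n0 G).Adj (yzero V n0 hn0) b)).card
      ≤ Fintype.card ((V × Fin (n0+1)) ⊕ ((V × Fin (10*n0)) ⊕ (Fin (100*n0*n0) ⊕ Unit))) := by
        simpa using hle
    _ = 111 * n0 * n0 + n0 + 1 := by
        simp [Fintype.card_sum, Fintype.card_prod, hV]
        ring

end GpFacts
end QAOA

namespace QAOA
open Finset

section Flip
variable {W : Type} [DecidableEq W]

/-- Flip the layer-0 spin of vertex `x̂`. -/
def flipC (p : ℕ) (xh : W) (z : W → Fin (2*p+1) → ℤˣ) : W → Fin (2*p+1) → ℤˣ :=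
  Function.update z xh (Function.update (z xh) (lay p 0) (-(z xh (lay p 0))))

lemma flipC_apply_ne (p : ℕ) (xh : W) (z : W → Fin (2*p+1) → ℤˣ) {x : W} (hx : x ≠ xh) :
    flipC p xh z x = z x := Function.update_of_ne hx _ _

lemma flipC_apply_xh (p : ℕ) (xh : W) (z : W → Fin (2*p+1) → ℤˣ) :
    flipC p xh z xh = Function.update (z xh) (lay p 0) (-(z xh (lay p 0))) :=
  Function.update_self _ _ _

lemma flipC_apply_layer (p : ℕ) (xh : W) (z : W → Fin (2*p+1) → ℤˣ) (x : W)
    {i : Fin (2*p+1)} (hi : i ≠ lay p 0) : flipC p xh z x i = z x i := by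
  by_cases hx : x = xh
  · subst hx
    rw [flipC_apply_xh, Function.update_of_ne hi]
  · rw [flipC_apply_ne _ _ _ hx]

lemma flipC_apply_lay0 (p : ℕ) (xh : W) (z : W → Fin (2*p+1) → ℤˣ) :
    flipC p xh z xh (lay p 0) = -(z xh (lay p 0)) := by
  rw [flipC_apply_xh, Function.update_self]

lemma flipC_flipC (p : ℕ) (xh : W) (z : W → Fin (2*p+1) → ℤˣ) :
    flipC p xh (flipC p xh z) = z := by
  funext x i
  by_cases hx : x = xh
  · subst hx
    by_cases hi : i = lay p 0
    · subst hi
      rw [flipC_apply_lay0, flipC_apply_lay0, neg_neg]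
    · rw [flipC_apply_layer _ _ _ _ hi, flipC_apply_layer _ _ _ _ hi]
  · rw [flipC_apply_ne _ _ _ hx, flipC_apply_ne _ _ _ hx]

lemma flipC_ne (p : ℕ) (xh : W) (z : W → Fin (2*p+1) → ℤˣ) :
    flipC p xh z ≠ z := by
  intro h
  have := congrFun (congrFun h xh) (lay p 0)
  rw [flipC_apply_lay0] at this
  exact units_neg_ne _ this

end Flip

section FlipCut
variable {W : Type} [Fintype W] [DecidableEq W] (H : SimpleGraph W) [DecidableRel H.Adj]

lemma expnt_flip (p : ℕ) (xh : W) (z : W → Fin (2*p+1) → ℤˣ) :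
    expnt H p (flipC p xh z) = expnt H p z := by
  unfold expnt
  refine Finset.sum_congr rfl fun j hj => ?_
  have hm := Finset.mem_Icc.mp hj
  rw [layerCut_congr H p z _ ((j : ℕ) : ℤ)
      (fun x => flipC_apply_layer _ _ _ _ (lay_ne (by omega) (by omega) (by omega))),
    layerCut_congr H p z _ (-((j : ℕ) : ℤ))
      (fun x => flipC_apply_layer _ _ _ _ (lay_ne (by omega) (by omega) (by omega)))]

end FlipCut

section KernelFlip

lemma mm_flip (a b d : ℤˣ) :
    mElem (Real.pi/4) a (-b) * mElemBar (Real.pi/4) (-b) d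
      = (if a = d then 1 else -1) * (mElem (Real.pi/4) a b * mElemBar (Real.pi/4) b d) := by
  have h1 : ((1:ℤˣ) = -1) = False := by simp
  have h2 : ((-1:ℤˣ) = 1) = False := by simp
  rcases Int.units_eq_one_or a with rfl | rfl <;>
    rcases Int.units_eq_one_or b with rfl | rfl <;>
      rcases Int.units_eq_one_or d with rfl | rfl <;>
        simp only [mElem, mElemBar, neg_neg, h1, h2, if_true, if_false, ite_true, ite_false,
          Real.cos_pi_div_four, Real.sin_pi_div_four, if_pos rfl, neg_neg] <;>
        norm_num <;> ring_nf <;> simp [Complex.I_sq] <;> ring_nf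

lemma betaAngles_p (p : ℕ) (ψ : ℝ) : betaAngles p ψ p = Real.pi / 4 := by
  simp [betaAngles]

lemma kernel_flip {p : ℕ} (hp : 2 ≤ p) (ψ : ℝ) (zx : Fin (2*p+1) → ℤˣ) :
    kernel p (betaAngles p ψ) (Function.update zx (lay p 0) (-(zx (lay p 0))))
      = (if zx (lay p p) = zx (lay p (-(p:ℤ))) then 1 else -1)
          * kernel p (betaAngles p ψ) zx := by
  have hne_p : lay p (p:ℤ) ≠ lay p 0 := lay_ne (by omega) (by omega) (by omega)
  have hne_np : lay p (-(p:ℤ)) ≠ lay p 0 := lay_ne (by omega) (by omega) (by omega)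
  have hprod1 : ∏ ℓ ∈ Finset.Icc 1 (p-1),
      mElem (betaAngles p ψ ℓ)
        (Function.update zx (lay p 0) (-(zx (lay p 0))) (lay p ℓ))
        (Function.update zx (lay p 0) (-(zx (lay p 0))) (lay p (ℓ+1)))
      = ∏ ℓ ∈ Finset.Icc 1 (p-1), mElem (betaAngles p ψ ℓ) (zx (lay p ℓ)) (zx (lay p (ℓ+1))) := by
    refine Finset.prod_congr rfl fun ℓ hℓ => ?_
    have hm := Finset.mem_Icc.mp hℓ
    rw [Function.update_of_ne (lay_ne (by omega) (by omega) (by omega)),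
      Function.update_of_ne (lay_ne (by omega) (by omega) (by omega))]
  have hprod2 : ∏ ℓ ∈ Finset.Icc 1 (p-1),
      mElemBar (betaAngles p ψ ℓ)
        (Function.update zx (lay p 0) (-(zx (lay p 0))) (lay p (-(ℓ:ℤ) - 1)))
        (Function.update zx (lay p 0) (-(zx (lay p 0))) (lay p (-(ℓ:ℤ))))
      = ∏ ℓ ∈ Finset.Icc 1 (p-1),
          mElemBar (betaAngles p ψ ℓ) (zx (lay p (-(ℓ:ℤ) - 1))) (zx (lay p (-(ℓ:ℤ)))) := by
    refine Finset.prod_congr rfl fun ℓ hℓ => ?_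
    have hm := Finset.mem_Icc.mp hℓ
    rw [Function.update_of_ne (lay_ne (by omega) (by omega) (by omega)),
      Function.update_of_ne (lay_ne (by omega) (by omega) (by omega))]
  unfold kernel
  rw [hprod1, hprod2, Function.update_of_ne hne_p, Function.update_of_ne hne_np,
    Function.update_self, betaAngles_p]
  have hmm := mm_flip (zx (lay p (p:ℤ))) (zx (lay p 0)) (zx (lay p (-(p:ℤ))))
  set q1 := ∏ ℓ ∈ Finset.Icc 1 (p-1),
    mElem (betaAngles p ψ ℓ) (zx (lay p ℓ)) (zx (lay p (ℓ+1))) with hq1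
  set q2 := ∏ ℓ ∈ Finset.Icc 1 (p-1),
    mElemBar (betaAngles p ψ ℓ) (zx (lay p (-(ℓ:ℤ) - 1))) (zx (lay p (-(ℓ:ℤ)))) with hq2
  linear_combination ((1:ℂ)/2 * q1 * q2) * hmm

end KernelFlip
end QAOA

namespace QAOA
open Finset

section ProdFlip
variable {W : Type} [Fintype W] [DecidableEq W]

lemma prod_kernel_flip {p : ℕ} (hp : 2 ≤ p) (ψ : ℝ) (xh : W) (z : W → Fin (2*p+1) → ℤˣ) :
    ∏ x, kernel p (betaAngles p ψ) (flipC p xh z x)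
      = (if z xh (lay p p) = z xh (lay p (-(p:ℤ))) then 1 else -1)
          * ∏ x, kernel p (betaAngles p ψ) (z x) := by
  have h1 : ∏ x ∈ Finset.univ \ {xh}, kernel p (betaAngles p ψ) (flipC p xh z x)
      = ∏ x ∈ Finset.univ \ {xh}, kernel p (betaAngles p ψ) (z x) := by
    refine Finset.prod_congr rfl fun x hx => ?_
    have hxne : x ≠ xh := by simpa using (Finset.mem_sdiff.mp hx).2
    rw [flipC_apply_ne _ _ _ hxne]
  rw [Finset.prod_eq_mul_prod_sdiff_singleton_of_mem (Finset.mem_univ xh)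
      (fun x => kernel p (betaAngles p ψ) (flipC p xh z x)),
    Finset.prod_eq_mul_prod_sdiff_singleton_of_mem (Finset.mem_univ xh)
      (fun x => kernel p (betaAngles p ψ) (z x)), h1, flipC_apply_xh, kernel_flip hp ψ]
  ring

end ProdFlip

section ExpntBound
variable {V : Type} [Fintype V] [DecidableEq V] {n0 : ℕ} (hn0 : 0 < n0)
  (G : SimpleGraph V) [DecidableRel G.Adj]

lemma expnt_bound (hV : Fintype.card V = n0) {p : ℕ} (hp : 2 ≤ p)
    (z : GPV V n0 → Fin (2*p+1) → ℤˣ)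
    (hxy : z (xzero V n0 hn0) (lay p p) ≠ z (yzero V n0 hn0) (lay p p))
    (hfl : ∀ x : GPV V n0, (x = xzero V n0 hn0 ∨ x = yzero V n0 hn0) ↔
        z x (lay p p) ≠ z x (lay p (-(p:ℤ)))) :
    expnt (Gp n0 G) p z
      ≤ ((p:ℤ) - 1) * (maxCut (Gp n0 G) : ℤ) + 222 * (n0:ℤ)^2 + 2 * n0 - 2 := by
  classical
  have hta : z (xzero V n0 hn0) (lay p (-(p:ℤ)))
      = - z (xzero V n0 hn0) (lay p p) := by
    have h := (hfl (xzero V n0 hn0)).mp (Or.inl rfl)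
    rw [(units_ne_iff _ _).mp h, neg_neg]
  have htb : z (yzero V n0 hn0) (lay p (-(p:ℤ)))
      = - z (yzero V n0 hn0) (lay p p) := by
    have h := (hfl (yzero V n0 hn0)).mp (Or.inr rfl)
    rw [(units_ne_iff _ _).mp h, neg_neg]
  have hto : ∀ x : GPV V n0, x ≠ xzero V n0 hn0 → x ≠ yzero V n0 hn0 →
      z x (lay p (-(p:ℤ))) = z x (lay p p) := by
    intro x h1 h2
    have h : ¬ (z x (lay p p) ≠ z x (lay p (-(p:ℤ)))) := fun hne =>
      (by rcases (hfl x).mpr hne with h | h; exact h1 h; exact h2 h : False)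
    exact (not_not.mp h).symm
  have hwa : GPV.W ≠ xzero V n0 hn0 := by simp [xzero]
  have hwb : GPV.W ≠ yzero V n0 hn0 := by simp [yzero]
  have hcut := cut_diff (Gp n0 G) (fun x => z x (lay p p)) (fun x => z x (lay p (-(p:ℤ))))
    (xzero V n0 hn0) (yzero V n0 hn0) GPV.W (111*n0*n0 + n0 + 1)
    (adj_x0_y0 n0 hn0 G) ((adj_x0_w n0 hn0 G))
    ((adj_y0_w n0 hn0 G)) hwa hwb hta htb hto hxy
    (deg_x0_le n0 hn0 G hV) (deg_y0_le n0 hn0 G hV)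
  have h2p : 2 * layerCut (Gp n0 G) p z (p:ℤ) + 8
      ≤ 2 * layerCut (Gp n0 G) p z (-(p:ℤ)) + 4 * (111*n0*n0 + n0 + 1) := by
    rw [two_mul_layerCut, two_mul_layerCut]
    exact hcut
  obtain ⟨q, rfl⟩ : ∃ q, p = q + 1 := ⟨p - 1, by omega⟩
  unfold expnt
  rw [Finset.sum_Icc_succ_top (by omega : 1 ≤ q + 1)]
  have hsum : ∑ j ∈ Finset.Icc 1 q,
      ((layerCut (Gp n0 G) (q+1) z (j:ℤ) : ℤ) - (layerCut (Gp n0 G) (q+1) z (-(j:ℤ)) : ℤ))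
      ≤ (q : ℤ) * (maxCut (Gp n0 G) : ℤ) := by
    calc ∑ j ∈ Finset.Icc 1 q,
        ((layerCut (Gp n0 G) (q+1) z (j:ℤ) : ℤ) - (layerCut (Gp n0 G) (q+1) z (-(j:ℤ)) : ℤ))
        ≤ ∑ _j ∈ Finset.Icc 1 q, (maxCut (Gp n0 G) : ℤ) := by
          refine Finset.sum_le_sum fun j _ => ?_
          have h1 := layerCut_le_maxCut (Gp n0 G) (q+1) z (j:ℤ)
          have h2 : (0:ℤ) ≤ (layerCut (Gp n0 G) (q+1) z (-(j:ℤ)) : ℤ) := Int.natCast_nonneg _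
          have h1' : (layerCut (Gp n0 G) (q+1) z (j:ℤ) : ℤ) ≤ (maxCut (Gp n0 G) : ℤ) := by
            exact_mod_cast h1
          omega
      _ = (q : ℤ) * (maxCut (Gp n0 G) : ℤ) := by
          rw [Finset.sum_const, Nat.card_Icc]
          simp [mul_comm]
  have hlast : (layerCut (Gp n0 G) (q+1) z ((q+1 : ℕ) : ℤ) : ℤ)
      - (layerCut (Gp n0 G) (q+1) z (-((q+1 : ℕ) : ℤ)) : ℤ)
      ≤ 222 * (n0:ℤ)^2 + 2 * n0 - 2 := by
    have := h2p
    push_cast at this ⊢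
    nlinarith [this]
  have hq : ((q + 1 : ℕ) : ℤ) - 1 = (q : ℤ) := by push_cast; ring
  rw [hq]
  linarith [hsum, hlast]

end ExpntBound
end QAOA

namespace QAOA
open Finset

section CoeffFlip
variable {W : Type} [Fintype W] [DecidableEq W]

lemma coeff_flip_cancel {p : ℕ} (hp : 2 ≤ p) (ψ : ℝ) (a b xh : W) (hab : a ≠ b)
    (z : W → Fin (2*p+1) → ℤˣ)
    (hC : (xh = a ∨ xh = b) ↔ z xh (lay p p) = z xh (lay p (-(p:ℤ)))) :
    coeffTerm p (betaAngles p ψ) a b (flipC p xh z)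
      = - coeffTerm p (betaAngles p ψ) a b z := by
  unfold coeffTerm
  rw [prod_kernel_flip hp ψ]
  by_cases hcase : xh = a ∨ xh = b
  · rw [if_pos (hC.mp hcase), one_mul]
    rcases hcase with rfl | rfl
    · rw [flipC_apply_lay0, flipC_apply_ne p xh z (Ne.symm hab)]
      simp only [Units.val_neg, Int.cast_neg]
      ring
    · rw [flipC_apply_lay0, flipC_apply_ne p xh z hab]
      simp only [Units.val_neg, Int.cast_neg]
      ring
  · have hne : ¬ z xh (lay p p) = z xh (lay p (-(p:ℤ))) := fun h => hcase (hC.mpr h)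
    rw [if_neg hne]
    have ha : a ≠ xh := fun h => hcase (Or.inl h.symm)
    have hb : b ≠ xh := fun h => hcase (Or.inr h.symm)
    rw [flipC_apply_ne p xh z ha, flipC_apply_ne p xh z hb]
    ring

end CoeffFlip
end QAOA

namespace QAOA

theorem no_high_degree_under_asynchronous_flips
    (n0 : ℕ) (hn0 : 0 < n0) {V : Type} [Fintype V] [DecidableEq V]
    (hV : Fintype.card V = n0) (G : SimpleGraph V) [DecidableRel G.Adj]
    (p : ℕ) (hp : 2 ≤ p) (ψ : ℝ) (k : ℤ)
    (hk : ((p : ℤ) - 1) * (maxCut (Gp n0 G) : ℤ) + 200 * (n0 : ℤ) ^ 2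
        + 2 * (n0 : ℤ) * (11 * (n0 : ℤ) + 1) ≤ k) :
    ∑ z ∈ Finset.univ.filter (fun z : GPV V n0 → Fin (2 * p + 1) → ℤˣ =>
        z (xzero V n0 hn0) (lay p p) ≠ z (yzero V n0 hn0) (lay p p) ∧
        expnt (Gp n0 G) p z = k),
      coeffTerm p (betaAngles p ψ) (xzero V n0 hn0) (yzero V n0 hn0) z = 0 := by
  classical
  letI : LinearOrder (GPV V n0) :=
    LinearOrder.lift' (Fintype.equivFin (GPV V n0)) (Fintype.equivFin (GPV V n0)).injective
  have hx0y0 : xzero V n0 hn0 ≠ yzero V n0 hn0 := (adj_x0_y0 n0 hn0 G).ne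
  have hlayp : lay p (p:ℤ) ≠ lay p 0 := lay_ne (by omega) (by omega) (by omega)
  have hlaynp : lay p (-(p:ℤ)) ≠ lay p 0 := lay_ne (by omega) (by omega) (by omega)
  have hFlne : ∀ z : GPV V n0 → Fin (2*p+1) → ℤˣ,
      z (xzero V n0 hn0) (lay p p) ≠ z (yzero V n0 hn0) (lay p p) →
      expnt (Gp n0 G) p z = k →
      (Finset.univ.filter (fun x : GPV V n0 =>
        ((x = xzero V n0 hn0 ∨ x = yzero V n0 hn0)
          ↔ z x (lay p p) = z x (lay p (-(p:ℤ)))))).Nonempty := by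
    intro z hzc hzk
    by_contra hne
    rw [Finset.not_nonempty_iff_eq_empty, Finset.filter_eq_empty_iff] at hne
    have hall : ∀ x : GPV V n0, (x = xzero V n0 hn0 ∨ x = yzero V n0 hn0)
        ↔ z x (lay p p) ≠ z x (lay p (-(p:ℤ))) := by
      intro x
      have := hne (Finset.mem_univ x)
      tauto
    have hbd := expnt_bound hn0 G hV hp z hzc hall
    rw [hzk] at hbd
    have hnum : 200 * (n0:ℤ)^2 + 2 * (n0:ℤ) * (11 * (n0:ℤ) + 1)
        = 222 * (n0:ℤ)^2 + 2 * (n0:ℤ) := by ring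
    linarith
  refine Finset.sum_involution
    (fun z hz => flipC p ((Finset.univ.filter (fun x : GPV V n0 =>
        ((x = xzero V n0 hn0 ∨ x = yzero V n0 hn0)
          ↔ z x (lay p p) = z x (lay p (-(p:ℤ)))))).min'
      (by
        rw [Finset.mem_filter] at hz
        exact hFlne z hz.2.1 hz.2.2)) z)
    ?_ ?_ ?_ ?_
  · intro z hz
    have hmem := Finset.min'_mem (Finset.univ.filter (fun x : GPV V n0 =>
        ((x = xzero V n0 hn0 ∨ x = yzero V n0 hn0)
          ↔ z x (lay p p) = z x (lay p (-(p:ℤ))))))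
      (by rw [Finset.mem_filter] at hz; exact hFlne z hz.2.1 hz.2.2)
    rw [Finset.mem_filter] at hmem
    rw [coeff_flip_cancel hp ψ _ _ _ hx0y0 z hmem.2]
    ring
  · intro z hz _
    exact flipC_ne p _ z
  · intro z hz
    rw [Finset.mem_filter] at hz ⊢
    refine ⟨Finset.mem_univ _, ?_, ?_⟩
    · rw [flipC_apply_layer _ _ _ _ hlayp, flipC_apply_layer _ _ _ _ hlayp]
      exact hz.2.1
    · rw [expnt_flip]
      exact hz.2.2
  · intro z hz
    have hsame : (Finset.univ.filter (fun x : GPV V n0 =>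
        ((x = xzero V n0 hn0 ∨ x = yzero V n0 hn0)
          ↔ (flipC p ((Finset.univ.filter (fun x : GPV V n0 =>
              ((x = xzero V n0 hn0 ∨ x = yzero V n0 hn0)
                ↔ z x (lay p p) = z x (lay p (-(p:ℤ)))))).min'
            (by rw [Finset.mem_filter] at hz; exact hFlne z hz.2.1 hz.2.2)) z)
            x (lay p p)
          = (flipC p ((Finset.univ.filter (fun x : GPV V n0 =>
              ((x = xzero V n0 hn0 ∨ x = yzero V n0 hn0)
                ↔ z x (lay p p) = z x (lay p (-(p:ℤ)))))).min'
            (by rw [Finset.mem_filter] at hz; exact hFlne z hz.2.1 hz.2.2)) z)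
            x (lay p (-(p:ℤ))))))
        = (Finset.univ.filter (fun x : GPV V n0 =>
        ((x = xzero V n0 hn0 ∨ x = yzero V n0 hn0)
          ↔ z x (lay p p) = z x (lay p (-(p:ℤ)))))) := by
      refine Finset.filter_congr fun x _ => ?_
      rw [flipC_apply_layer _ _ _ _ hlayp, flipC_apply_layer _ _ _ _ hlaynp]
    simp only [hsame]
    exact flipC_flipC p _ z

end QAOA
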